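/- For a ∈ {0,1}^d and ε ∈ (0,1/4), let |ψ_a⟩ = Σ_{i∈[d],ℓ∈{0,1}} √(D_a(i,ℓ)) |i,ℓ⟩ where D_a(i,ℓ) = (1+(−1)^{a_i+ℓ}4ε)/(2d), and let ρ = 2^{−d} Σ_{a∈{0,1}^d} |ψ_a⟩⟨ψ_a|. Then the largest eigenvalue of ρ is at least 1 − 4ε² − O(ε⁴); specifically, for |ψ⟩ = (2d)^{−1/2} Σ_{i,ℓ}|i,ℓ⟩ one has ⟨ψ|ρ|ψ⟩ = ((√(1+4ε)+√(1−4ε))/2)² ≥ (1 − 2ε² − O(ε⁴))². -/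

import Mathlib

open Matrix Finset

/-- The agnostic-learning quantum example state `|ψ_a⟩` has amplitudes
`√(D_a(i,ℓ))` with `D_a(i,ℓ) = (1+(-1)^{a_i+ℓ} 4ε)/(2d)`. -/
noncomputable def agnState (d : ℕ) (ε : ℝ) (a : Fin d → ZMod 2) :
    Fin d × ZMod 2 → ℝ :=
  fun x => Real.sqrt ((1 + (-1 : ℝ) ^ (a x.1 + x.2).val * 4 * ε) / (2 * d))

/-- The average state `ρ = 2^{-d} Σ_a |ψ_a⟩⟨ψ_a|`. -/
noncomputable def agnRho (d : ℕ) (ε : ℝ) : Matrix (Fin d × ZMod 2) (Fin d × ZMod 2) ℝ :=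
  (2 ^ d : ℝ)⁻¹ • ∑ a : Fin d → ZMod 2, Matrix.vecMulVec (agnState d ε a) (agnState d ε a)

set_option maxHeartbeats 1000000 in
/-- For the uniform unit vector `|ψ⟩ = (2d)^{-1/2} Σ_{i,ℓ} |i,ℓ⟩`, one has
`⟨ψ|ρ|ψ⟩ = ((√(1+4ε)+√(1-4ε))/2)² ≥ (1 - 2ε² - 44ε⁴)²`, hence the largest
eigenvalue of `ρ` is at least `1 - 4ε² - 88ε⁴` (i.e. `1 - 4ε² - O(ε⁴)`). -/
theorem agnRho_top_eigenvalue (d : ℕ) (hd : 0 < d) (ε : ℝ) (hε0 : 0 < ε) (hε : ε < 1 / 4) :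
    (let ψ : Fin d × ZMod 2 → ℝ := fun _ => (Real.sqrt (2 * d))⁻¹;
      ψ ⬝ᵥ (agnRho d ε).mulVec ψ
        = ((Real.sqrt (1 + 4 * ε) + Real.sqrt (1 - 4 * ε)) / 2) ^ 2 ∧
      (1 - 2 * ε ^ 2 - 44 * ε ^ 4) ^ 2 ≤ ψ ⬝ᵥ (agnRho d ε).mulVec ψ) ∧
    ∃ μ ∈ spectrum ℝ (agnRho d ε), 1 - 4 * ε ^ 2 - 88 * ε ^ 4 ≤ μ := by
  have hd2 : (0:ℝ) < 2 * d := by positivity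
  set ψ : Fin d × ZMod 2 → ℝ := fun _ => (Real.sqrt (2 * d))⁻¹ with hψ
  set s : ℝ := (Real.sqrt (1 + 4 * ε) + Real.sqrt (1 - 4 * ε)) / 2 with hs
  set g : ZMod 2 → ℝ := fun b => Real.sqrt ((1 + (-1 : ℝ) ^ b.val * 4 * ε) / (2 * d)) with hg
  have hsq : Real.sqrt (2 * d) ^ 2 = 2 * d := Real.sq_sqrt hd2.le
  have hsqpos : 0 < Real.sqrt (2 * d) := Real.sqrt_pos.2 hd2
  have hinv : (Real.sqrt (2 * d))⁻¹ * (Real.sqrt (2 * d))⁻¹ = (2 * (d:ℝ))⁻¹ := by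
    rw [← mul_inv, Real.mul_self_sqrt hd2.le]
  have hA : ∀ b : ZMod 2, g b + g (b + 1) = g 0 + g 1 := by
    intro b
    fin_cases b
    · rfl
    · have h2 : (1 + 1 : ZMod 2) = 0 := rfl
      show g 1 + g (1 + 1) = g 0 + g 1
      rw [h2, add_comm]
  have hg01 : g 0 + g 1 = 2 * s * (Real.sqrt (2 * d))⁻¹ := by
    have e0 : g 0 = Real.sqrt (1 + 4 * ε) / Real.sqrt (2 * d) := by
      show Real.sqrt ((1 + (-1:ℝ)^(0:ZMod 2).val * 4 * ε) / (2 * d)) = _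
      norm_num [Real.sqrt_div (by linarith : (0:ℝ) ≤ 1 + 4*ε)]
    have e1 : g 1 = Real.sqrt (1 - 4 * ε) / Real.sqrt (2 * d) := by
      show Real.sqrt ((1 + (-1:ℝ)^(1:ZMod 2).val * 4 * ε) / (2 * d)) = _
      rw [show (1 + (-1:ℝ)^(1:ZMod 2).val * 4 * ε) = 1 - 4 * ε by norm_num [ZMod.val_one]; ring]
      exact Real.sqrt_div (by linarith) _
    rw [e0, e1, ← add_div, div_eq_mul_inv, hs]
    ring
  have hZsum : ∀ (f : ZMod 2 → ℝ), ∑ ℓ : ZMod 2, f ℓ = f 0 + f 1 := by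
    intro f
    rw [show (univ : Finset (ZMod 2)) = {0,1} from by decide, Finset.sum_pair (by decide)]
  have hstate : ∀ (a : Fin d → ZMod 2) x, agnState d ε a x = g (a x.1 + x.2) :=
    fun a x => rfl
  have hdne : (2:ℝ) * (d:ℝ) ≠ 0 := hd2.ne'
  -- dot product of each state with ψ
  have hdot : ∀ a : Fin d → ZMod 2, agnState d ε a ⬝ᵥ ψ = s := by
    intro a
    have h1 : agnState d ε a ⬝ᵥ ψ
        = ∑ i : Fin d, (∑ ℓ : ZMod 2, g (a i + ℓ)) * (Real.sqrt (2 * d))⁻¹ := by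
      simp [dotProduct, hψ, Fintype.sum_prod_type, Finset.sum_mul, hstate]
    have h2 : ∀ i : Fin d, (∑ ℓ : ZMod 2, g (a i + ℓ)) = g 0 + g 1 := by
      intro i
      rw [Fintype.sum_equiv (Equiv.addLeft (a i)) (fun ℓ => g (a i + ℓ)) g (fun x => by simp),
        hZsum]
    rw [h1]
    simp only [h2, hg01]
    rw [Finset.sum_const, Finset.card_univ, Fintype.card_fin, nsmul_eq_mul]
    have h4 : (d:ℝ) * (2 * s * (Real.sqrt (2*d))⁻¹ * (Real.sqrt (2*d))⁻¹)
        = (d:ℝ) * (2 * s) * (2 * (d:ℝ))⁻¹ := by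
      rw [mul_assoc (2*s), hinv]; ring
    rw [h4]
    field_simp
  -- the sum of all states at a point
  have havg : ∀ x : Fin d × ZMod 2,
      ∑ a : Fin d → ZMod 2, agnState d ε a x = 2^(d:ℕ) * s * (Real.sqrt (2 * d))⁻¹ := by
    intro x
    obtain ⟨i, ℓ⟩ := x
    set c : Fin d → ZMod 2 := fun j => if j = i then 1 else 0 with hc
    have hflip : ∑ a : Fin d → ZMod 2, g (a i + ℓ + 1) = ∑ a : Fin d → ZMod 2, g (a i + ℓ) := by
      refine Fintype.sum_equiv (Equiv.addRight c) _ _ (fun a => ?_)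
      have : (a + c) i + ℓ = a i + ℓ + 1 := by
        simp [hc]
        ring
      simp only [Equiv.coe_addRight, this]
    have h2 : (2:ℝ) * ∑ a : Fin d → ZMod 2, g (a i + ℓ)
        = ∑ a : Fin d → ZMod 2, (g (a i + ℓ) + g (a i + ℓ + 1)) := by
      rw [Finset.sum_add_distrib, hflip]; ring
    have h3 : ∑ a : Fin d → ZMod 2, (g (a i + ℓ) + g (a i + ℓ + 1))
        = 2^(d:ℕ) * (g 0 + g 1) := by
      have he : ∀ a : Fin d → ZMod 2, g (a i + ℓ) + g (a i + ℓ + 1) = g 0 + g 1 :=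
        fun a => hA _
      simp only [he]
      rw [Finset.sum_const, Finset.card_univ, nsmul_eq_mul]
      simp [Fintype.card_fun]
    have h4 : ∑ a : Fin d → ZMod 2, agnState d ε a (i, ℓ) = ∑ a : Fin d → ZMod 2, g (a i + ℓ) := by
      simp [hstate]
    rw [h4]
    have h5 := h2.trans h3
    rw [hg01] at h5
    linarith
  -- ψ is an eigenvector with eigenvalue s^2
  have key : (agnRho d ε).mulVec ψ = (s^2) • ψ := by
    funext x
    have h1 : (agnRho d ε).mulVec ψ x
        = (2^(d:ℕ) : ℝ)⁻¹ * ∑ a : Fin d → ZMod 2, agnState d ε a x * (agnState d ε a ⬝ᵥ ψ) := by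
      simp only [agnRho, Matrix.mulVec, dotProduct, Matrix.smul_apply, Matrix.sum_apply,
        Matrix.vecMulVec_apply, smul_eq_mul, Finset.sum_mul, Finset.mul_sum]
      rw [Finset.sum_comm]
      exact Finset.sum_congr rfl fun a _ => Finset.sum_congr rfl fun y _ => by ring
    rw [h1]
    simp only [hdot]
    rw [← Finset.sum_mul, havg]
    have h2 : ((2:ℝ)^(d:ℕ)) ≠ 0 := by positivity
    show (2^(d:ℕ):ℝ)⁻¹ * (2^(d:ℕ) * s * (Real.sqrt (2 * d))⁻¹ * s) = s^2 * (Real.sqrt (2*d))⁻¹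
    field_simp
  have hψpsd : ψ ⬝ᵥ ψ = 1 := by
    have h1 : ψ ⬝ᵥ ψ = (Fintype.card (Fin d × ZMod 2) : ℝ)
        * ((Real.sqrt (2*d))⁻¹ * (Real.sqrt (2*d))⁻¹) := by
      simp [dotProduct, hψ, Finset.sum_const, Finset.card_univ, nsmul_eq_mul]
    have hcard : (Fintype.card (Fin d × ZMod 2) : ℝ) = 2 * d := by
      simp [Fintype.card_prod]; ring
    rw [h1, hinv, hcard]
    field_simp
  have hval : ψ ⬝ᵥ (agnRho d ε).mulVec ψ = s^2 := by
    rw [key, dotProduct_smul, smul_eq_mul, hψpsd, mul_one]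
  -- arithmetic bounds
  have hs2 : s^2 = (1 + Real.sqrt (1 - 16*ε^2))/2 := by
    have h1 : Real.sqrt (1+4*ε)^2 = 1+4*ε := Real.sq_sqrt (by linarith)
    have h2 : Real.sqrt (1-4*ε)^2 = 1-4*ε := Real.sq_sqrt (by linarith)
    have h3 : Real.sqrt (1+4*ε) * Real.sqrt (1-4*ε) = Real.sqrt (1-16*ε^2) := by
      rw [← Real.sqrt_mul (by linarith : (0:ℝ) ≤ 1+4*ε)]
      congr 1
      ring
    rw [hs, div_pow, add_sq, h1, h2, mul_assoc, h3]
    ring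
  have hε2 : ε^2 < 1/16 := by nlinarith
  have h4pos : (0:ℝ) < ε^4 := pow_pos hε0 4
  have h6 : ε^6 < ε^4/16 := by nlinarith [pow_pos hε0 2]
  have h8 : ε^8 < ε^4/256 := by nlinarith [pow_pos hε0 2, sq_nonneg (ε^2 - 1/16)]
  have hlow : 1 - 8*ε^2 - 128*ε^4 ≤ Real.sqrt (1 - 16*ε^2) := by
    rw [Real.le_sqrt (by nlinarith) (by nlinarith)]
    nlinarith [h6, h8]
  have hs2low : 1 - 4*ε^2 - 64*ε^4 ≤ s^2 := by
    rw [hs2]; linarith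
  refine ⟨⟨hval, ?_⟩, s^2, ?_, ?_⟩
  · rw [hval]
    nlinarith [hs2low, h6, h8, h4pos, hε2]
  · rw [← AlgEquiv.spectrum_eq (Matrix.toLinAlgEquiv' : Matrix (Fin d × ZMod 2) (Fin d × ZMod 2) ℝ ≃ₐ[ℝ] _) (agnRho d ε),
      ← Module.End.hasEigenvalue_iff_mem_spectrum]
    refine Module.End.hasEigenvalue_of_hasEigenvector (x := ψ) ⟨Module.End.mem_eigenspace_iff.2 ?_, ?_⟩
    · rw [Matrix.toLinAlgEquiv'_apply]
      exact key
    · intro h0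
      have := congrFun h0 (⟨0, hd⟩, 0)
      simp only [hψ, Pi.zero_apply] at this
      exact (inv_ne_zero hsqpos.ne') this
  · linarith [hs2low, h4pos]
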